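/- Let V ∈ span(e₁, …, e_{2n}) be a unit vector of the oscillator algebra 𝔤ₙ(λ), and let u = α ξ + β ζ for real numbers α, β. Then A_V u = (1/2)(α I − 2β E_λ) φV, (∇_u A_V)u = (1/4)(α I − 2β E_λ)² V, and R(V, A_V u) u = 0, where I denotes the identity map. -/

import Mathlib

open scoped RealInnerProductSpace
open Finset

noncomputable section

/-- The underlying inner product space of the oscillator algebra `𝔤ₙ(λ)`:
a `(2n+2)`-dimensional real inner product space. -/
abbrev Osc (n : ℕ) := EuclideanSpace ℝ (Fin (2*n+2))

/-- The basis vectors `e₁, …, eₙ`. -/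
def oe (n : ℕ) (i : Fin n) : Osc n :=
  EuclideanSpace.single ⟨i.1, by have := i.2; omega⟩ 1

/-- The basis vectors `e_{n+1}, …, e_{2n}`. -/
def oE (n : ℕ) (i : Fin n) : Osc n :=
  EuclideanSpace.single ⟨n + i.1, by have := i.2; omega⟩ 1

/-- The basis vector `ξ`. -/
def oXi (n : ℕ) : Osc n := EuclideanSpace.single ⟨2*n, by omega⟩ 1

/-- The basis vector `ζ`. -/
def oZeta (n : ℕ) : Osc n := EuclideanSpace.single ⟨2*n+1, by omega⟩ 1

/-- `br` is the Lie bracket of the oscillator algebra `𝔤ₙ(λ)`: the bilinear map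
determined by `[eᵢ, e_{n+j}] = δᵢⱼ ξ`, `[ζ, eⱼ] = λⱼ e_{n+j}`, `[ζ, e_{n+j}] = −λⱼ eⱼ`,
all other brackets of basis vectors being zero. -/
structure IsOscBracket (n : ℕ) (lam : Fin n → ℝ)
    (br : Osc n →ₗ[ℝ] Osc n →ₗ[ℝ] Osc n) : Prop where
  anti : ∀ X Y : Osc n, br X Y = - br Y X
  ee : ∀ i j : Fin n, br (oe n i) (oe n j) = 0
  eE : ∀ i j : Fin n, br (oe n i) (oE n j) = if i = j then oXi n else 0
  EE : ∀ i j : Fin n, br (oE n i) (oE n j) = 0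
  exi : ∀ i : Fin n, br (oe n i) (oXi n) = 0
  Exi : ∀ i : Fin n, br (oE n i) (oXi n) = 0
  zee : ∀ j : Fin n, br (oZeta n) (oe n j) = lam j • oE n j
  zeE : ∀ j : Fin n, br (oZeta n) (oE n j) = - (lam j • oe n j)
  xize : br (oXi n) (oZeta n) = 0

/-- `nab` is the Levi-Civita connection of the left-invariant metric (evaluated on
left-invariant fields): the bilinear map determined by the Koszul formula
`2 g(∇_X Y, Z) = g([X,Y], Z) − g([Y,Z], X) + g([Z,X], Y)`. -/
def IsLeviCivita (n : ℕ) (br nab : Osc n →ₗ[ℝ] Osc n →ₗ[ℝ] Osc n) : Prop :=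
  ∀ X Y Z : Osc n,
    2 * ⟪nab X Y, Z⟫ = ⟪br X Y, Z⟫ - ⟪br Y Z, X⟫ + ⟪br Z X, Y⟫

/-- The Nomizu operator `A_V X = −∇_X V`. -/
def nomizu {n : ℕ} (nab : Osc n →ₗ[ℝ] Osc n →ₗ[ℝ] Osc n) (V X : Osc n) : Osc n :=
  -(nab X V)

/-- The covariant derivative of the Nomizu operator:
`(∇_X A_V) Y = ∇_X (A_V Y) − A_V (∇_X Y)`. -/
def covNomizu {n : ℕ} (nab : Osc n →ₗ[ℝ] Osc n →ₗ[ℝ] Osc n) (V X Y : Osc n) : Osc n :=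
  nab X (nomizu nab V Y) - nomizu nab V (nab X Y)

/-- The curvature tensor `R(X,Y)Z = ∇_X ∇_Y Z − ∇_Y ∇_X Z − ∇_{[X,Y]} Z`. -/
def curvR {n : ℕ} (br nab : Osc n →ₗ[ℝ] Osc n →ₗ[ℝ] Osc n) (X Y Z : Osc n) : Osc n :=
  nab X (nab Y Z) - nab Y (nab X Z) - nab (br X Y) Z

/-- A unit vector `V ∈ 𝔤ₙ(λ)` is a *minimal* unit vector field if there is an orthonormal
basis `u₁, …, u_{2n+2}` of eigenvectors of `A_Vᵀ A_V` (the eigenvector condition being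
expressed as `g(A_V W, A_V uᵢ) = σᵢ² g(W, uᵢ)` for all `W`) with eigenvalues `σᵢ²` such that
`Σᵢ ((∇_{uᵢ} A_V)uᵢ + A_V R(V, A_V uᵢ)uᵢ)/(1 + σᵢ²) = (Σᵢ σᵢ²/(1 + σᵢ²)) V`. -/
def IsMinimal {n : ℕ} (br nab : Osc n →ₗ[ℝ] Osc n →ₗ[ℝ] Osc n) (V : Osc n) : Prop :=
  ∃ (u : Fin (2*n+2) → Osc n) (σ : Fin (2*n+2) → ℝ),
    (∀ i j, ⟪u i, u j⟫ = if i = j then 1 else 0) ∧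
    (∀ i, ∀ W : Osc n,
      ⟪nomizu nab V W, nomizu nab V (u i)⟫ = (σ i)^2 * ⟪W, u i⟫) ∧
    (∑ i, (1 + (σ i)^2)⁻¹ •
        (covNomizu nab V (u i) (u i) +
          nomizu nab V (curvR br nab V (nomizu nab V (u i)) (u i))))
      = (∑ i, (σ i)^2 / (1 + (σ i)^2)) • V

/-- The operator `φ` with `φ eᵢ = e_{n+i}`, `φ e_{n+i} = −eᵢ`, `φ ξ = φ ζ = 0`. -/
structure IsPhi (n : ℕ) (phi : Osc n →ₗ[ℝ] Osc n) : Prop where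
  he : ∀ i : Fin n, phi (oe n i) = oE n i
  hE : ∀ i : Fin n, phi (oE n i) = - oe n i
  hxi : phi (oXi n) = 0
  hzeta : phi (oZeta n) = 0

/-- The operator `E_λ` with `E_λ eᵢ = λᵢ eᵢ`, `E_λ e_{n+i} = λᵢ e_{n+i}`, `E_λ ξ = E_λ ζ = 0`. -/
structure IsElam (n : ℕ) (lam : Fin n → ℝ) (El : Osc n →ₗ[ℝ] Osc n) : Prop where
  he : ∀ i : Fin n, El (oe n i) = lam i • oe n i
  hE : ∀ i : Fin n, El (oE n i) = lam i • oE n i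
  hxi : El (oXi n) = 0
  hzeta : El (oZeta n) = 0

section Osc_aux1
section OscAux

variable {n : ℕ}

lemma osc_inner_single {m : ℕ} (i j : Fin m) :
    ⟪(EuclideanSpace.single i (1:ℝ)), EuclideanSpace.single j 1⟫ = if i = j then 1 else 0 := by
  rw [EuclideanSpace.inner_single_left]
  simp [EuclideanSpace.single_apply, eq_comm]

lemma oi_ee (i j : Fin n) : ⟪oe n i, oe n j⟫ = if i = j then (1:ℝ) else 0 := by
  rw [oe, oe, osc_inner_single]; simp [Fin.ext_iff]

lemma oi_eE (i j : Fin n) : ⟪oe n i, oE n j⟫ = (0:ℝ) := by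
  rw [oe, oE, osc_inner_single]; have := i.2; simp [Fin.ext_iff]; omega

lemma oi_Ee (i j : Fin n) : ⟪oE n i, oe n j⟫ = (0:ℝ) := by
  rw [oe, oE, osc_inner_single]; have := j.2; simp [Fin.ext_iff]; omega

lemma oi_EE (i j : Fin n) : ⟪oE n i, oE n j⟫ = if i = j then (1:ℝ) else 0 := by
  rw [oE, oE, osc_inner_single]; simp [Fin.ext_iff]

lemma oi_exi (i : Fin n) : ⟪oe n i, oXi n⟫ = (0:ℝ) := by
  rw [oe, oXi, osc_inner_single]; have := i.2; simp [Fin.ext_iff]; omega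

lemma oi_xie (i : Fin n) : ⟪oXi n, oe n i⟫ = (0:ℝ) := by
  rw [oe, oXi, osc_inner_single]; have := i.2; simp [Fin.ext_iff]; omega

lemma oi_Exi (i : Fin n) : ⟪oE n i, oXi n⟫ = (0:ℝ) := by
  rw [oE, oXi, osc_inner_single]; have := i.2; simp [Fin.ext_iff]; omega

lemma oi_xiE (i : Fin n) : ⟪oXi n, oE n i⟫ = (0:ℝ) := by
  rw [oE, oXi, osc_inner_single]; have := i.2; simp [Fin.ext_iff]; omega

lemma oi_ez (i : Fin n) : ⟪oe n i, oZeta n⟫ = (0:ℝ) := by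
  rw [oe, oZeta, osc_inner_single]; have := i.2; simp [Fin.ext_iff]; omega

lemma oi_ze (i : Fin n) : ⟪oZeta n, oe n i⟫ = (0:ℝ) := by
  rw [oe, oZeta, osc_inner_single]; have := i.2; simp [Fin.ext_iff]; omega

lemma oi_Ez (i : Fin n) : ⟪oE n i, oZeta n⟫ = (0:ℝ) := by
  rw [oE, oZeta, osc_inner_single]; have := i.2; simp [Fin.ext_iff]; omega

lemma oi_zE (i : Fin n) : ⟪oZeta n, oE n i⟫ = (0:ℝ) := by
  rw [oE, oZeta, osc_inner_single]; have := i.2; simp [Fin.ext_iff]; omega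

lemma oi_xixi : ⟪oXi n, oXi n⟫ = (1:ℝ) := by
  rw [oXi, osc_inner_single]; simp

lemma oi_xiz : ⟪oXi n, oZeta n⟫ = (0:ℝ) := by
  rw [oXi, oZeta, osc_inner_single]; simp [Fin.ext_iff]

lemma oi_zxi : ⟪oZeta n, oXi n⟫ = (0:ℝ) := by
  rw [oXi, oZeta, osc_inner_single]; simp [Fin.ext_iff]

lemma oi_zz : ⟪oZeta n, oZeta n⟫ = (1:ℝ) := by
  rw [oZeta, osc_inner_single]; simp

lemma osc_single_eq {m : ℕ} {a b : Fin m} (h : (a : ℕ) = b) :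
    (EuclideanSpace.single a (1:ℝ)) = EuclideanSpace.single b 1 :=
  congrArg (fun t => EuclideanSpace.single t 1) (Fin.ext h)

lemma osc_top (X : Osc n) :
    X ∈ Submodule.span ℝ (Set.range (oe n) ∪ Set.range (oE n) ∪ {oXi n, oZeta n}) := by
  have hb := Module.Basis.mem_span ((EuclideanSpace.basisFun (Fin (2*n+2)) ℝ).toBasis) X
  refine Submodule.span_le.mpr ?_ hb
  rintro _ ⟨k, rfl⟩
  apply Submodule.subset_span
  rw [OrthonormalBasis.coe_toBasis, EuclideanSpace.basisFun_apply]
  rcases lt_or_ge k.1 n with h | h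
  · exact Or.inl (Or.inl ⟨⟨k.1, h⟩, by rw [oe]⟩)
  · rcases lt_or_ge k.1 (2*n) with h2 | h2
    · refine Or.inl (Or.inr ⟨⟨k.1 - n, by omega⟩, ?_⟩)
      rw [oE]; exact osc_single_eq (by simp only [Fin.val_mk]; omega)
    · have hk : k.1 = 2*n ∨ k.1 = 2*n+1 := by have := k.2; omega
      rcases hk with hk | hk
      · refine Or.inr (Or.inl ?_)
        rw [oXi]; exact (osc_single_eq (by simp [hk])).symm
      · refine Or.inr (Or.inr ?_)
        rw [oZeta]; exact (osc_single_eq (by simp [hk])).symm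

lemma osc_induction (P : Osc n → Prop) (he : ∀ i, P (oe n i)) (hE : ∀ i, P (oE n i))
    (hxi : P (oXi n)) (hz : P (oZeta n)) (h0 : P 0)
    (hadd : ∀ x y, P x → P y → P (x + y)) (hsmul : ∀ (c : ℝ) x, P x → P (c • x))
    (X : Osc n) : P X := by
  refine Submodule.span_induction (p := fun x _ => P x) ?_ h0 (fun x y _ _ => hadd x y)
    (fun c x _ => hsmul c x) (osc_top X)
  rintro x ((⟨i, rfl⟩ | ⟨i, rfl⟩) | rfl | rfl)
  exacts [he i, hE i, hxi, hz]

def IsBasisVec (n : ℕ) (x : Osc n) : Prop :=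
  (∃ i, x = oe n i) ∨ (∃ i, x = oE n i) ∨ x = oXi n ∨ x = oZeta n

lemma osc_induction₂ (P : Osc n → Osc n → Prop)
    (hb : ∀ X Y, IsBasisVec n X → IsBasisVec n Y → P X Y)
    (h0l : ∀ Y, P 0 Y) (h0r : ∀ X, P X 0)
    (haddl : ∀ x y z, P x z → P y z → P (x + y) z)
    (haddr : ∀ x y z, P x y → P x z → P x (y + z))
    (hsmull : ∀ (c : ℝ) x y, P x y → P (c • x) y)
    (hsmulr : ∀ (c : ℝ) x y, P x y → P x (c • y)) :
    ∀ X Y, P X Y := by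
  have main : ∀ X, IsBasisVec n X → ∀ Y, P X Y := by
    intro X hX
    exact osc_induction (fun Y => P X Y)
      (fun j => hb X _ hX (Or.inl ⟨j, rfl⟩))
      (fun j => hb X _ hX (Or.inr (Or.inl ⟨j, rfl⟩)))
      (hb X _ hX (Or.inr (Or.inr (Or.inl rfl))))
      (hb X _ hX (Or.inr (Or.inr (Or.inr rfl))))
      (h0r X) (fun a b ha hb' => haddr X a b ha hb') (fun c a ha => hsmulr c X a ha)
  intro X Y
  exact osc_induction (fun X => ∀ Y, P X Y)
    (fun i => main _ (Or.inl ⟨i, rfl⟩))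
    (fun i => main _ (Or.inr (Or.inl ⟨i, rfl⟩)))
    (main _ (Or.inr (Or.inr (Or.inl rfl))))
    (main _ (Or.inr (Or.inr (Or.inr rfl))))
    (fun Y => h0l Y)
    (fun a b ha hb' Y => haddl a b Y (ha Y) (hb' Y))
    (fun c a ha Y => hsmull c a Y (ha Y)) X Y

end OscAux
end Osc_aux1

section Osc_p1
variable {n : ℕ} {lam : Fin n → ℝ} {phi El : Osc n →ₗ[ℝ] Osc n}

lemma phi_flip (hphi : IsPhi n phi) :
    ∀ A B : Osc n, ⟪phi A, B⟫ = -⟪phi B, A⟫ := by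
  refine osc_induction₂ _ ?_ ?_ ?_ ?_ ?_ ?_ ?_
  · rintro X Y (⟨i, rfl⟩ | ⟨i, rfl⟩ | rfl | rfl) (⟨j, rfl⟩ | ⟨j, rfl⟩ | rfl | rfl) <;>
      simp only [hphi.he, hphi.hE, hphi.hxi, hphi.hzeta, oi_ee, oi_eE, oi_Ee, oi_EE, oi_exi,
        oi_xie, oi_Exi, oi_xiE, oi_ez, oi_ze, oi_Ez, oi_zE, oi_xixi, oi_xiz, oi_zxi, oi_zz,
        inner_neg_left, inner_neg_right, inner_zero_left, inner_zero_right,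
        neg_neg, neg_zero] <;>
      try rfl
    all_goals split_ifs with h <;> simp_all
  · intro Y; simp
  · intro X; simp
  · intro x y z hx hy; simp only [map_add, inner_add_left, inner_add_right, hx, hy]; ring
  · intro x y z hx hy; simp only [map_add, inner_add_left, inner_add_right, hx, hy]; ring
  · intro c x y h
    simp only [map_smul, real_inner_smul_left, real_inner_smul_right, h]; ring
  · intro c x y h
    simp only [map_smul, real_inner_smul_left, real_inner_smul_right, h]; ring

lemma phiEl_flip (hphi : IsPhi n phi) (hEl : IsElam n lam El) :
    ∀ A B : Osc n, ⟪phi (El A), B⟫ = -⟪phi (El B), A⟫ := by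
  refine osc_induction₂ _ ?_ ?_ ?_ ?_ ?_ ?_ ?_
  · rintro X Y (⟨i, rfl⟩ | ⟨i, rfl⟩ | rfl | rfl) (⟨j, rfl⟩ | ⟨j, rfl⟩ | rfl | rfl) <;>
      simp only [hphi.he, hphi.hE, hphi.hxi, hphi.hzeta, hEl.he, hEl.hE, hEl.hxi, hEl.hzeta,
        map_smul, map_zero, map_neg, smul_neg,
        oi_ee, oi_eE, oi_Ee, oi_EE, oi_exi,
        oi_xie, oi_Exi, oi_xiE, oi_ez, oi_ze, oi_Ez, oi_zE, oi_xixi, oi_xiz, oi_zxi, oi_zz,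
        inner_neg_left, inner_neg_right, inner_zero_left, inner_zero_right,
        real_inner_smul_left, real_inner_smul_right,
        mul_ite, mul_one, mul_zero, neg_neg, neg_zero, mul_neg] <;>
      try rfl
    all_goals try split_ifs with h <;> simp_all
  · intro Y; simp
  · intro X; simp
  · intro x y z hx hy; simp only [map_add, inner_add_left, inner_add_right, hx, hy]; ring
  · intro x y z hx hy; simp only [map_add, inner_add_left, inner_add_right, hx, hy]; ring
  · intro c x y h
    simp only [map_smul, real_inner_smul_left, real_inner_smul_right, h]; ring
  · intro c x y h
    simp only [map_smul, real_inner_smul_left, real_inner_smul_right, h]; ring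

lemma comm_ElPhi (hphi : IsPhi n phi) (hEl : IsElam n lam El) :
    ∀ X : Osc n, El (phi X) = phi (El X) := by
  intro X
  refine osc_induction (fun X => El (phi X) = phi (El X)) ?_ ?_ ?_ ?_ ?_ ?_ ?_ X
  · intro i; simp [hphi.he, hphi.hE, hEl.he, hEl.hE, map_smul]
  · intro i; simp [hphi.he, hphi.hE, hEl.he, hEl.hE, map_smul]
  · simp [hphi.hxi, hEl.hxi]
  · simp [hphi.hzeta, hEl.hzeta]
  · simp
  · intro x y hx hy; simp [map_add, hx, hy]
  · intro c x hx; simp [map_smul, hx]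
end Osc_p1

section Osc_p2
variable {n : ℕ} {lam : Fin n → ℝ} {br : Osc n →ₗ[ℝ] Osc n →ₗ[ℝ] Osc n}
  {phi El : Osc n →ₗ[ℝ] Osc n}

lemma br_formula (hbr : IsOscBracket n lam br) (hphi : IsPhi n phi) (hEl : IsElam n lam El) :
    ∀ A B : Osc n, br A B =
      ⟪phi A, B⟫ • oXi n + ⟪A, oZeta n⟫ • phi (El B) - ⟪B, oZeta n⟫ • phi (El A) := by
  have hEe : ∀ i j, br (oE n i) (oe n j) = -(if j = i then oXi n else 0) := fun i j => by
    rw [hbr.anti, hbr.eE]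
  have hxie : ∀ i, br (oXi n) (oe n i) = 0 := fun i => by
    rw [hbr.anti, hbr.exi, neg_zero]
  have hxiE : ∀ i, br (oXi n) (oE n i) = 0 := fun i => by
    rw [hbr.anti, hbr.Exi, neg_zero]
  have heze : ∀ j, br (oe n j) (oZeta n) = -(lam j • oE n j) := fun j => by
    rw [hbr.anti, hbr.zee]
  have hEze : ∀ j, br (oE n j) (oZeta n) = lam j • oe n j := fun j => by
    rw [hbr.anti, hbr.zeE, neg_neg]
  have hself : ∀ X : Osc n, br X X = 0 := fun X => by
    have h := hbr.anti X X
    have h2 : (2:ℝ) • br X X = 0 := by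
      rw [two_smul]
      exact add_eq_zero_iff_eq_neg.mpr h
    simpa using h2
  have hzexi : br (oZeta n) (oXi n) = 0 := by rw [hbr.anti, hbr.xize, neg_zero]
  refine osc_induction₂ _ ?_ ?_ ?_ ?_ ?_ ?_ ?_
  · rintro X Y (⟨i, rfl⟩ | ⟨i, rfl⟩ | rfl | rfl) (⟨j, rfl⟩ | ⟨j, rfl⟩ | rfl | rfl) <;>
      simp only [hbr.ee, hbr.eE, hbr.EE, hbr.exi, hbr.Exi, hbr.zee, hbr.zeE, hbr.xize,
        hEe, hxie, hxiE, heze, hEze, hself, hzexi,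
        hphi.he, hphi.hE, hphi.hxi, hphi.hzeta, hEl.he, hEl.hE, hEl.hxi, hEl.hzeta,
        oi_ee, oi_eE, oi_Ee, oi_EE, oi_exi,
        oi_xie, oi_Exi, oi_xiE, oi_ez, oi_ze, oi_Ez, oi_zE, oi_xixi, oi_xiz, oi_zxi, oi_zz,
        map_smul, map_zero, smul_zero, zero_smul, one_smul, smul_neg, neg_neg, neg_zero,
        inner_neg_left, inner_neg_right, neg_smul,
        ite_smul, add_zero, zero_add, sub_zero, zero_sub, smul_smul] <;>
      try rfl
    all_goals try simp only [zero_mul, mul_zero, one_mul, zero_smul, smul_zero,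
      inner_zero_left, inner_zero_right, neg_zero, add_zero, zero_add, sub_zero, zero_sub,
      neg_neg]
    all_goals try rfl
    all_goals split_ifs <;> simp_all
  · intro Y; simp
  · intro X; simp
  · intro x y z hx hy
    simp only [map_add, LinearMap.add_apply, inner_add_left, hx, hy, add_smul]
    module
  · intro x y z hx hy
    simp only [map_add, LinearMap.add_apply, inner_add_left, inner_add_right, hx, hy, add_smul]
    module
  · intro c x y h
    simp only [map_smul, LinearMap.smul_apply, real_inner_smul_left, h, smul_smul]
    module
  · intro c x y h
    simp only [map_smul, LinearMap.smul_apply, real_inner_smul_left, real_inner_smul_right,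
      h, smul_smul]
    module
end Osc_p2

section Osc_p3
variable {n : ℕ} {lam : Fin n → ℝ} {br nab : Osc n →ₗ[ℝ] Osc n →ₗ[ℝ] Osc n}
  {phi El : Osc n →ₗ[ℝ] Osc n}

lemma nab_master (hbr : IsOscBracket n lam br) (hlc : IsLeviCivita n br nab)
    (hphi : IsPhi n phi) (hEl : IsElam n lam El) :
    ∀ X Y : Osc n, nab X Y =
      (2⁻¹ * ⟪phi X, Y⟫) • oXi n - (2⁻¹ * ⟪X, oXi n⟫) • phi Y
        - (2⁻¹ * ⟪Y, oXi n⟫) • phi X + ⟪X, oZeta n⟫ • phi (El Y) := by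
  intro X Y
  apply ext_inner_right ℝ
  intro Z
  have h := hlc X Y Z
  rw [br_formula hbr hphi hEl X Y, br_formula hbr hphi hEl Y Z,
    br_formula hbr hphi hEl Z X] at h
  simp only [inner_add_left, inner_sub_left, real_inner_smul_left] at h
  rw [phi_flip hphi Z X, phiEl_flip hphi hEl Z X, phiEl_flip hphi hEl Y X,
    phiEl_flip hphi hEl Z Y, real_inner_comm X (oXi n), real_inner_comm Y (oXi n)] at h
  simp only [inner_add_left, inner_sub_left, real_inner_smul_left]
  linear_combination h/2
end Osc_p3

section Osc_p4
variable {n : ℕ} {lam : Fin n → ℝ} {phi El : Osc n →ₗ[ℝ] Osc n}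

lemma V_facts (hphi : IsPhi n phi) (hEl : IsElam n lam El) (V : Osc n)
    (hV : V ∈ Submodule.span ℝ (Set.range (oe n) ∪ Set.range (oE n))) :
    ⟪V, oXi n⟫ = 0 ∧ ⟪V, oZeta n⟫ = 0 ∧ phi (phi V) = -V ∧ phi (phi (El V)) = -(El V) := by
  induction hV using Submodule.span_induction with
  | mem x h =>
    rcases h with ⟨i, rfl⟩ | ⟨i, rfl⟩ <;>
      simp [-PiLp.inner_apply, hphi.he, hphi.hE, hEl.he, hEl.hE, map_smul, oi_exi, oi_Exi, oi_ez, oi_Ez,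
        smul_neg]
  | zero => simp
  | add x y hx hy ihx ihy =>
    obtain ⟨h1, h2, h3, h4⟩ := ihx
    obtain ⟨g1, g2, g3, g4⟩ := ihy
    refine ⟨?_, ?_, ?_, ?_⟩ <;>
      simp [-PiLp.inner_apply, inner_add_left, map_add, h1, h2, h3, h4, g1, g2, g3, g4] <;> abel
  | smul c x hx ihx =>
    obtain ⟨h1, h2, h3, h4⟩ := ihx
    refine ⟨?_, ?_, ?_, ?_⟩ <;>
      simp [-PiLp.inner_apply, real_inner_smul_left, map_smul, h1, h2, h3, h4]
end Osc_p4

/-- For a unit `V ∈ span(e₁,…,e_{2n})` and `u = α ξ + β ζ`: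
`A_V u = ½ (α I − 2β E_λ) φV`, `(∇_u A_V)u = ¼ (α I − 2β E_λ)² V`, and `R(V, A_V u) u = 0`. -/

theorem computations_xi_zeta_plane (n : ℕ) (hn : 1 ≤ n) (lam : Fin n → ℝ)
    (br nab : Osc n →ₗ[ℝ] Osc n →ₗ[ℝ] Osc n)
    (hbr : IsOscBracket n lam br) (hlc : IsLeviCivita n br nab)
    (phi El : Osc n →ₗ[ℝ] Osc n) (hphi : IsPhi n phi) (hEl : IsElam n lam El)
    (V : Osc n)
    (hV : V ∈ Submodule.span ℝ (Set.range (oe n) ∪ Set.range (oE n)))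
    (hVunit : ‖V‖ = 1)
    (α β : ℝ) (u : Osc n) (hu : u = α • oXi n + β • oZeta n) :
    nomizu nab V u =
      ((1/2) : ℝ) • ((α • (LinearMap.id : Osc n →ₗ[ℝ] Osc n) - (2*β) • El) (phi V)) ∧
    covNomizu nab V u u =
      ((1/4) : ℝ) • ((α • (LinearMap.id : Osc n →ₗ[ℝ] Osc n) - (2*β) • El)
        ((α • (LinearMap.id : Osc n →ₗ[ℝ] Osc n) - (2*β) • El) V)) ∧
    curvR br nab V (nomizu nab V u) u = 0 := by
  subst hu
  obtain ⟨hVxi, hVz, hp2V, hp2ElV⟩ := V_facts hphi hEl V hV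
  have nabf := nab_master hbr hlc hphi hEl
  have brf := br_formula hbr hphi hEl
  have hflip := phi_flip hphi
  have hcomm := comm_ElPhi hphi hEl
  have hpxi0 : ∀ A : Osc n, ⟪phi A, oXi n⟫ = 0 := fun A => by
    rw [hflip A (oXi n), hphi.hxi, inner_zero_left, neg_zero]
  have hpz0 : ∀ A : Osc n, ⟪phi A, oZeta n⟫ = 0 := fun A => by
    rw [hflip A (oZeta n), hphi.hzeta, inner_zero_left, neg_zero]
  have hElz : ∀ A : Osc n, ⟪El A, oZeta n⟫ = 0 := fun A => by
    refine osc_induction (fun A => ⟪El A, oZeta n⟫ = 0) ?_ ?_ ?_ ?_ ?_ ?_ ?_ A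
    · intro i; simp only [hEl.he, real_inner_smul_left, oi_ez, mul_zero]
    · intro i; simp only [hEl.hE, real_inner_smul_left, oi_Ez, mul_zero]
    · simp only [hEl.hxi, inner_zero_left]
    · simp only [hEl.hzeta, inner_zero_left]
    · simp only [map_zero, inner_zero_left]
    · intro x y hx hy; simp only [map_add, inner_add_left, hx, hy, add_zero]
    · intro c x hx; simp only [map_smul, real_inner_smul_left, hx, mul_zero]
  have hElxi : ∀ A : Osc n, ⟪El A, oXi n⟫ = 0 := fun A => by
    refine osc_induction (fun A => ⟪El A, oXi n⟫ = 0) ?_ ?_ ?_ ?_ ?_ ?_ ?_ A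
    · intro i; simp only [hEl.he, real_inner_smul_left, oi_exi, mul_zero]
    · intro i; simp only [hEl.hE, real_inner_smul_left, oi_Exi, mul_zero]
    · simp only [hEl.hxi, inner_zero_left]
    · simp only [hEl.hzeta, inner_zero_left]
    · simp only [map_zero, inner_zero_left]
    · intro x y hx hy; simp only [map_add, inner_add_left, hx, hy, add_zero]
    · intro c x hx; simp only [map_smul, real_inner_smul_left, hx, mul_zero]
  -- A_V u
  have hW : nomizu nab V (α • oXi n + β • oZeta n)
      = (2⁻¹ * α) • phi V - β • phi (El V) := by
    simp only [nomizu, map_add, map_smul, LinearMap.add_apply, LinearMap.smul_apply, nabf,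
      hphi.hxi, hphi.hzeta, oi_xixi, oi_xiz, oi_zxi, oi_zz, hVxi, hVz,
      inner_zero_left, inner_zero_right, smul_zero, zero_smul, mul_zero, mul_one,
      add_zero, zero_add, sub_zero, zero_sub, neg_zero, neg_neg]
    module
  refine ⟨?_, ?_, ?_⟩
  · rw [hW]
    simp only [LinearMap.sub_apply, LinearMap.smul_apply, LinearMap.id_apply, hcomm V]
    module
  · -- covariant derivative of A_V
    have huu : nab (α • oXi n + β • oZeta n) (α • oXi n + β • oZeta n) = 0 := by
      simp only [map_add, map_smul, LinearMap.add_apply, LinearMap.smul_apply, nabf,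
        hphi.hxi, hphi.hzeta, hEl.hxi, hEl.hzeta, map_zero, inner_zero_left,
        inner_zero_right, oi_xixi, oi_xiz, oi_zxi, oi_zz, smul_zero, zero_smul, mul_zero,
        mul_one, add_zero, zero_add, sub_zero, zero_sub, neg_zero]
    simp only [covNomizu, hW, huu]
    simp only [nomizu, map_zero, LinearMap.zero_apply, neg_zero, sub_zero]
    simp only [map_add, map_sub, map_smul, LinearMap.add_apply, LinearMap.smul_apply, nabf,
      hphi.hxi, hphi.hzeta, hEl.hxi, hEl.hzeta, map_zero, inner_zero_left, inner_zero_right,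
      oi_xixi, oi_xiz, oi_zxi, oi_zz, hpxi0, hpz0, smul_zero, zero_smul, mul_zero, mul_one,
      add_zero, zero_add, sub_zero, zero_sub, neg_zero, neg_neg, smul_neg, neg_smul]
    simp only [← hcomm, hp2V, hp2ElV, map_neg, smul_neg, neg_neg,
      LinearMap.sub_apply, LinearMap.smul_apply, LinearMap.id_apply, map_sub, map_smul]
    module
  · -- curvature
    have hXu : ∀ X : Osc n, nab X (α • oXi n + β • oZeta n) = -((2⁻¹ * α) • phi X) := by
      intro X
      simp only [map_add, map_smul, nabf, hphi.hxi, hphi.hzeta, hEl.hxi, hEl.hzeta, map_zero,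
        oi_xixi, oi_xiz, oi_zxi, oi_zz, hpxi0, hpz0, inner_zero_left, inner_zero_right,
        inner_add_right, real_inner_smul_right, inner_add_left, real_inner_smul_left,
        smul_zero, zero_smul, mul_zero, zero_mul, mul_one, add_zero, zero_add, sub_zero,
        zero_sub, neg_zero]
      try module
    have hc1 : ⟪V, phi V⟫ = ⟪phi V, V⟫ := real_inner_comm _ _
    have hc2 : ⟪El V, phi V⟫ = ⟪phi V, El V⟫ := real_inner_comm _ _
    simp only [curvR, hW, hXu, map_neg, map_smul, map_sub, map_add, brf,
      LinearMap.add_apply, LinearMap.smul_apply, LinearMap.sub_apply, nabf,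
      hphi.hxi, hphi.hzeta, hEl.hxi, hEl.hzeta, map_zero, inner_zero_left, inner_zero_right,
      oi_xixi, oi_xiz, oi_zxi, oi_zz, hpxi0, hpz0, hVxi, hVz,
      inner_add_left, inner_sub_left, inner_neg_left, inner_add_right, inner_sub_right,
      inner_neg_right, real_inner_smul_left, real_inner_smul_right,
      smul_zero, zero_smul, mul_zero, zero_mul, mul_one, one_mul, add_zero, zero_add,
      sub_zero, zero_sub, neg_zero, neg_neg, smul_neg, neg_smul, smul_smul,
      hp2V, hp2ElV, hc1, hc2, hElz, hElxi]
    try simp only [← hcomm, hp2V, hp2ElV, map_neg, smul_neg, neg_neg, map_sub, map_smul,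
      hc1, hc2, hElz, hElxi]
    module
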